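/- The function q1(x) = 2(x^6 + 6x^5 - 3x^4 - 16x^3 - 21x^2 - 6x - 1) ψ'(x+1) + (x+1)(x^2+1)(x^4 + 4x^3 - 2x^2 - 4x - 3) ψ''(x+1) is strictly decreasing on [0,1]. -/

import Mathlib

/-- The digamma function ψ = (log ∘ Γ)'. -/
noncomputable def digamma : ℝ → ℝ := deriv fun x => Real.log (Real.Gamma x)

/-- The k-th derivative of the digamma function. -/
noncomputable def polygamma (k : ℕ) : ℝ → ℝ := iteratedDeriv k digamma

open Filter Topology Set

namespace PG

noncomputable def S (k : ℕ) (t : ℝ) : ℝ := ∑' m : ℕ, ((t + m) ^ k)⁻¹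

lemma summable_S {k : ℕ} (hk : 2 ≤ k) {t : ℝ} (ht : 0 < t) :
    Summable (fun m : ℕ => ((t + m) ^ k)⁻¹) := by
  set c : ℝ := min t 1 with hc
  have hc0 : 0 < c := lt_min ht one_pos
  have key : ∀ m : ℕ, ((t + m) ^ k)⁻¹ ≤ (c ^ k)⁻¹ * ((m + 1 : ℝ) ^ k)⁻¹ := by
    intro m
    have hm : (0:ℝ) ≤ m := m.cast_nonneg
    have h1 : c * (m + 1 : ℝ) ≤ t + m := by
      rcases le_total t 1 with h | h
      · have hct : c = t := by simp [hc, h]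
        rw [hct]; nlinarith
      · have hct : c = 1 := by simp [hc, h]
        rw [hct]; nlinarith
    have h2 : (c * (m+1)) ^ k ≤ (t + m) ^ k := by
      apply pow_le_pow_left₀ (by positivity) h1
    rw [mul_pow] at h2
    rw [← mul_inv]
    exact inv_anti₀ (by positivity) h2
  apply Summable.of_nonneg_of_le (fun m => by positivity) key
  apply Summable.mul_left
  have hs : Summable (fun m : ℕ => ((m : ℝ) ^ k)⁻¹) := by
    exact Real.summable_nat_pow_inv.mpr (by omega)
  exact (summable_nat_add_iff 1).mpr hs |>.congr (fun m => by push_cast; ring_nf)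

lemma S_pos {k : ℕ} (hk : 2 ≤ k) {t : ℝ} (ht : 0 < t) : 0 < S k t := by
  apply Summable.tsum_pos (summable_S hk ht) (fun m => by positivity) 0
  positivity

end PG

namespace PG2
open PG

lemma hasDerivAt_term (k : ℕ) (hk : 1 ≤ k) (m : ℕ) {x : ℝ} (hx : 0 < x + m) :
    HasDerivAt (fun u : ℝ => ((u + m) ^ k)⁻¹) (-(k:ℝ) * ((x + m) ^ (k+1))⁻¹) x := by
  have h0 : (x + (m:ℝ)) ≠ 0 := ne_of_gt hx
  have h := (((hasDerivAt_id x).add_const (m:ℝ)).pow k).inv (pow_ne_zero k h0)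
  simp only [id_eq] at h ⊢
  refine h.congr_deriv ?_
  have h2 : ((x + (m:ℝ)) ^ k) ^ 2 = (x + m) ^ (k-1) * (x + m) ^ (k+1) := by
    rw [← pow_mul, ← pow_add]
    congr 1
    omega
  show -(↑k * (x + ↑m) ^ (k - 1) * 1) / ((x + (m:ℝ)) ^ k) ^ 2 = _
  rw [h2]
  field_simp

lemma hasDerivAt_S {k : ℕ} (hk : 2 ≤ k) {t : ℝ} (ht : 0 < t) :
    HasDerivAt (S k) (-(k:ℝ) * S (k+1) t) t := by
  have h2 : (0:ℝ) < t/2 := by linarith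
  have hmem : t ∈ Ioi (t/2) := by simp; linarith
  apply hasDerivAt_of_tendstoUniformlyOn (l := (atTop : Filter (Finset ℕ))) (isOpen_Ioi (a := t/2))
    (f := fun (A : Finset ℕ) (x : ℝ) => ∑ m ∈ A, ((x + m)^k)⁻¹)
    (f' := fun (A : Finset ℕ) (x : ℝ) => ∑ m ∈ A, (-(k:ℝ) * ((x + m)^(k+1))⁻¹))
    ?_ ?_ ?_ hmem
  · have hu : Summable (fun m : ℕ => (k:ℝ) * ((t/2 + m)^(k+1))⁻¹) :=
      (summable_S (by omega) h2).mul_left _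
    have := tendstoUniformlyOn_tsum hu (f := fun (m:ℕ) (x:ℝ) => -(k:ℝ) * ((x + m)^(k+1))⁻¹)
      (s := Ioi (t/2)) ?_
    · apply this.congr_right
      intro x hx
      simp only []
      rw [tsum_mul_left]
      rfl
    · intro m x hx
      have hx' : t/2 < x := hx
      have h3 : (0:ℝ) < x + m := by have := m.cast_nonneg (α := ℝ); linarith
      simp only [norm_mul, norm_neg, norm_inv, norm_pow, Real.norm_natCast,
        Real.norm_of_nonneg h3.le]
      have h4 : (0:ℝ) < t/2 + m := by have := m.cast_nonneg (α := ℝ); linarith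
      gcongr
  · filter_upwards with A x hx
    apply HasDerivAt.fun_sum
    intro m _
    have hxx : t/2 < x := hx
    have := m.cast_nonneg (α := ℝ)
    exact hasDerivAt_term k (by omega) m (by linarith)
  · intro x hx
    have : t/2 < x := hx
    exact (summable_S hk (by linarith)).hasSum
end PG2

open PG PG2

noncomputable def phi (m : ℕ) (x : ℝ) : ℝ := (1 + m : ℝ)⁻¹ - (x + m)⁻¹

lemma phi_eq (m : ℕ) {x : ℝ} (hx : 0 < x) :
    phi m x = (x - 1) * ((1+(m:ℝ)) * (x + m))⁻¹ := by
  have h1 : (1 + (m:ℝ)) ≠ 0 := by positivity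
  have h2 : (x + (m:ℝ)) ≠ 0 := by positivity
  rw [phi]; field_simp; ring

lemma abs_phi_le {m : ℕ} {x c R : ℝ} (hc : 0 < c) (hcx : c * (1 + m) ≤ x + m)
    (hxR : |x - 1| ≤ R) (hx : 0 < x) :
    |phi m x| ≤ (R / c) * ((1 + (m:ℝ))^2)⁻¹ := by
  have h1 : (0:ℝ) < 1 + m := by positivity
  have h2 : (0:ℝ) < x + m := by positivity
  rw [phi_eq m hx, abs_mul, abs_inv, abs_mul, abs_of_pos h1, abs_of_pos h2]
  have key : ((1+(m:ℝ))*(x+m))⁻¹ ≤ (c*(1+(m:ℝ))^2)⁻¹ := by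
    apply inv_anti₀ (by positivity)
    nlinarith
  calc |x-1| * ((1+(m:ℝ))*(x+m))⁻¹ ≤ R * (c*(1+(m:ℝ))^2)⁻¹ :=
        mul_le_mul hxR key (by positivity) (le_trans (abs_nonneg _) hxR)
    _ = (R/c)*((1+(m:ℝ))^2)⁻¹ := by
        rw [mul_inv, div_eq_mul_inv]
        ring

lemma summable_sq_shift : Summable (fun m : ℕ => ((1 + (m:ℝ))^2)⁻¹) := by
  have hs : Summable (fun m : ℕ => ((m : ℝ) ^ 2)⁻¹) :=
    Real.summable_nat_pow_inv.mpr one_lt_two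
  exact ((summable_nat_add_iff 1).mpr hs).congr (fun m => by push_cast; ring_nf)

lemma summable_phi {x : ℝ} (hx : 0 < x) : Summable (fun m => phi m x) := by
  set c : ℝ := min x 1 with hc
  have hc0 : 0 < c := lt_min hx one_pos
  apply Summable.of_abs
  apply Summable.of_nonneg_of_le (fun m => abs_nonneg _)
    (fun m => abs_phi_le hc0 ?_ (le_refl |x-1|) hx)
  · exact summable_sq_shift.mul_left _
  · have hm : (0:ℝ) ≤ m := m.cast_nonneg
    rcases le_total x 1 with h | h
    · have hct : c = x := by simp [hc, h]
      rw [hct]; nlinarith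
    · have hct : c = 1 := by simp [hc, h]
      rw [hct]; nlinarith

lemma tendsto_log_sub_harmonic :
    Tendsto (fun n : ℕ => Real.log n - ∑ m ∈ Finset.range (n+1), (1 + (m:ℝ))⁻¹) atTop
      (𝓝 (-Real.eulerMascheroniConstant)) := by
  have hh : ∀ n : ℕ, ∑ m ∈ Finset.range (n+1), (1 + (m:ℝ))⁻¹ = ((harmonic (n+1) : ℚ) : ℝ) := by
    intro n
    rw [harmonic]
    push_cast
    apply Finset.sum_congr rfl
    intro m _
    ring_nf
  have h1 : Tendsto (fun n : ℕ => ((harmonic (n+1) : ℚ) : ℝ) - Real.log (n+1)) atTop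
      (𝓝 Real.eulerMascheroniConstant) :=
    by
      have := Real.tendsto_harmonic_sub_log.comp (tendsto_add_atTop_nat 1)
      apply this.congr
      intro n
      simp [Function.comp]
  have h2 : Tendsto (fun n : ℕ => Real.log (n+1) - Real.log n) atTop (𝓝 0) := by
    have h3 : Tendsto (fun n : ℕ => (1:ℝ) + 1/n) atTop (𝓝 1) := by
      simpa using (tendsto_const_nhds (x := (1:ℝ))).add tendsto_one_div_atTop_nhds_zero_nat
    have h4 : Tendsto (fun n : ℕ => Real.log (1 + 1/n)) atTop (𝓝 0) := by
      have := (Real.continuousAt_log one_ne_zero).tendsto.comp h3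
      simpa [Function.comp_def] using this
    apply h4.congr'
    filter_upwards [eventually_gt_atTop 0] with n hn
    have hn' : (0:ℝ) < n := by exact_mod_cast hn
    rw [← Real.log_div (by positivity) (ne_of_gt hn')]
    congr 1
    field_simp
  have := (h1.add h2).neg
  simp only [neg_zero, add_zero] at this
  apply this.congr
  intro n
  rw [hh n]
  push_cast
  ring

noncomputable def dg (x : ℝ) : ℝ := -Real.eulerMascheroniConstant + ∑' m : ℕ, phi m x

lemma hasDerivAt_logGamma {x : ℝ} (hx : 0 < x) :
    HasDerivAt (fun u => Real.log (Real.Gamma u)) (dg x) x := by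
  set s : Set ℝ := Ioo (x/2) (x+1) with hs
  have hxs : x ∈ s := by constructor <;> simp <;> linarith
  have hspos : ∀ u ∈ s, 0 < u := fun u hu => lt_trans (by linarith) hu.1
  set c : ℝ := min (x/2) 1 with hc
  have hc0 : 0 < c := lt_min (by linarith) one_pos
  apply hasDerivAt_of_tendstoUniformlyOn (l := (atTop : Filter ℕ)) (isOpen_Ioo (a := x/2) (b := x+1))
    (f := fun (n : ℕ) (u : ℝ) =>
      u * Real.log n + Real.log (Nat.factorial n : ℝ) - ∑ m ∈ Finset.range (n+1), Real.log (u + m))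
    (f' := fun (n : ℕ) (u : ℝ) =>
      (Real.log n - ∑ m ∈ Finset.range (n+1), (1 + (m:ℝ))⁻¹)
        + ∑ m ∈ Finset.range (n+1), phi m u)
    ?_ ?_ ?_ hxs
  · -- uniform convergence of derivatives
    apply TendstoUniformlyOn.add
    · exact tendsto_log_sub_harmonic.tendstoUniformlyOn_const s
    · -- partial sums of phi
      have hb : ∀ (m : ℕ) (u : ℝ), u ∈ s → ‖phi m u‖ ≤ ((x+2) / c) * ((1 + (m:ℝ))^2)⁻¹ := by
        intro m u hu
        rw [Real.norm_eq_abs]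
        apply abs_phi_le hc0 ?_ ?_ (hspos u hu)
        · have hm : (0:ℝ) ≤ m := m.cast_nonneg
          have hu1 : x/2 < u := hu.1
          rcases le_total (x/2) 1 with h | h
          · have hct : c = x/2 := by simp [hc, h]
            rw [hct]; nlinarith
          · have hct : c = 1 := by simp [hc, h]
            rw [hct]; nlinarith
        · rw [abs_le]
          have h1 := hu.1; have h2 := hu.2
          constructor <;> nlinarith
      have H := tendstoUniformlyOn_tsum_nat (summable_sq_shift.mul_left ((x+2)/c)) hb
      intro u hu
      exact (tendsto_add_atTop_nat 1).eventually (H u hu)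
  · -- derivatives of partial log-Gamma-seq
    filter_upwards with n u hu
    have hu0 : 0 < u := hspos u hu
    have hsum : HasDerivAt (fun u : ℝ => ∑ m ∈ Finset.range (n+1), Real.log (u + m))
        (∑ m ∈ Finset.range (n+1), (u + (m:ℝ))⁻¹) u := by
      apply HasDerivAt.fun_sum
      intro m _
      have hm : (0:ℝ) ≤ m := m.cast_nonneg
      have h := ((hasDerivAt_id u).add_const (m:ℝ)).log (by positivity)
      simpa using h
    have h1 : HasDerivAt (fun u : ℝ => u * Real.log n + Real.log (Nat.factorial n : ℝ))
        (Real.log n) u := by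
      simpa using (hasDerivAt_mul_const (Real.log n)).add_const (Real.log (Nat.factorial n : ℝ))
    have := h1.sub hsum
    refine this.congr_deriv ?_
    simp only [phi, Finset.sum_sub_distrib]
    ring
  · -- pointwise convergence to log Gamma
    intro u hu
    have hu0 : 0 < u := hspos u hu
    have h1 : Tendsto (fun n => Real.GammaSeq u n) atTop (𝓝 (Real.Gamma u)) :=
      Real.GammaSeq_tendsto_Gamma u
    have h2 : Tendsto (fun n => Real.log (Real.GammaSeq u n)) atTop
        (𝓝 (Real.log (Real.Gamma u))) :=
      ((Real.continuousAt_log (Real.Gamma_pos_of_pos hu0).ne').tendsto).comp h1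
    apply h2.congr'
    filter_upwards [eventually_gt_atTop 0] with n hn
    have hn' : (0:ℝ) < n := by exact_mod_cast hn
    have hprod : ∀ j ∈ Finset.range (n+1), u + (j:ℝ) ≠ 0 := by
      intro j _
      have : (0:ℝ) ≤ j := j.cast_nonneg
      positivity
    have hprodpos : (0:ℝ) < ∏ j ∈ Finset.range (n+1), (u + j) := by
      apply Finset.prod_pos
      intro j _
      have : (0:ℝ) ≤ j := j.cast_nonneg
      positivity
    rw [Real.GammaSeq, Real.log_div (by positivity) (ne_of_gt hprodpos),
      Real.log_mul (by positivity) (by positivity),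
      Real.log_rpow hn', Real.log_prod hprod]

lemma hasDerivAt_dg {x : ℝ} (hx : 0 < x) : HasDerivAt dg (S 2 x) x := by
  have key : HasDerivAt (fun u : ℝ => ∑' m : ℕ, phi m u) (S 2 x) x := by
    have h2 : (0:ℝ) < x/2 := by linarith
    have hmem : x ∈ Ioi (x/2) := by simp; linarith
    apply hasDerivAt_of_tendstoUniformlyOn (l := (atTop : Filter (Finset ℕ)))
      (isOpen_Ioi (a := x/2))
      (f := fun (A : Finset ℕ) (u : ℝ) => ∑ m ∈ A, phi m u)
      (f' := fun (A : Finset ℕ) (u : ℝ) => ∑ m ∈ A, ((u + m)^2)⁻¹)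
      ?_ ?_ ?_ hmem
    · have hu : Summable (fun m : ℕ => ((x/2 + m)^2)⁻¹) := summable_S le_rfl h2
      have := tendstoUniformlyOn_tsum hu (f := fun (m:ℕ) (u:ℝ) => ((u + m)^2)⁻¹)
        (s := Ioi (x/2)) ?_
      · exact this.congr_right (fun u _ => rfl)
      · intro m u hu'
        have hu2 : x/2 < u := hu'
        have hm : (0:ℝ) ≤ m := m.cast_nonneg
        have h3 : (0:ℝ) < u + m := by linarith
        rw [norm_inv, norm_pow, Real.norm_of_nonneg h3.le]
        have h4 : (0:ℝ) < x/2 + m := by linarith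
        gcongr
    · filter_upwards with A u hu
      apply HasDerivAt.fun_sum
      intro m _
      have hu2 : x/2 < u := hu
      have hm : (0:ℝ) ≤ m := m.cast_nonneg
      have h := hasDerivAt_term 1 le_rfl m (x := u) (by linarith)
      have h' : HasDerivAt (fun v : ℝ => (v + (m:ℝ))⁻¹) (-((u + m)^2)⁻¹) u := by
        have := h
        simp only [pow_one] at this
        convert this using 1
        push_cast
        ring
      have := (hasDerivAt_const u ((1 + (m:ℝ))⁻¹)).sub h'
      exact this.congr_deriv (by ring)
    · intro u hu'
      have hu2 : x/2 < u := hu'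
      exact (summable_phi (by linarith)).hasSum
  have := key.const_add (-Real.eulerMascheroniConstant)
  exact this

lemma digamma_eq_dg {x : ℝ} (hx : 0 < x) : digamma x = dg x := by
  rw [digamma]
  exact (hasDerivAt_logGamma hx).deriv

lemma hasDerivAt_digamma {x : ℝ} (hx : 0 < x) : HasDerivAt digamma (S 2 x) x := by
  have heq : dg =ᶠ[𝓝 x] digamma := by
    filter_upwards [Ioi_mem_nhds hx] with y hy
    exact (digamma_eq_dg hy).symm
  exact (hasDerivAt_dg hx).congr_of_eventuallyEq heq.symm

lemma polygamma_one_eq {x : ℝ} (hx : 0 < x) : polygamma 1 x = S 2 x := by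
  rw [polygamma, iteratedDeriv_one]
  exact (hasDerivAt_digamma hx).deriv

lemma hasDerivAt_S2 {x : ℝ} (hx : 0 < x) : HasDerivAt (S 2) (-2 * S 3 x) x := by
  have := hasDerivAt_S (k := 2) le_rfl hx
  norm_num at this
  convert this using 1
  norm_num

lemma hasDerivAt_S3 {x : ℝ} (hx : 0 < x) : HasDerivAt (S 3) (-3 * S 4 x) x := by
  have := hasDerivAt_S (k := 3) (by norm_num) hx
  norm_num at this
  convert this using 1
  norm_num

lemma polygamma_two_eq {x : ℝ} (hx : 0 < x) : polygamma 2 x = -2 * S 3 x := by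
  rw [polygamma, iteratedDeriv_succ, iteratedDeriv_one]
  have heq : deriv digamma =ᶠ[𝓝 x] S 2 := by
    filter_upwards [Ioi_mem_nhds hx] with y hy
    exact (hasDerivAt_digamma hy).deriv
  rw [heq.deriv_eq]
  exact (hasDerivAt_S2 hx).deriv

noncomputable def Dfun (x : ℝ) : ℝ :=
    (12*x^5+60*x^4-24*x^3-96*x^2-84*x-12) * S 2 (x+1)
  - (18*x^6+84*x^5+18*x^4-72*x^3-114*x^2-60*x-18) * S 3 (x+1)
  + (6*x^7+30*x^6+18*x^5-6*x^4-30*x^3-54*x^2-42*x-18) * S 4 (x+1)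

lemma tau_neg {x : ℝ} (hx0 : 0 < x) (hx1 : x < 1) (m : ℕ) :
    (12*x^5+60*x^4-24*x^3-96*x^2-84*x-12) * ((x+1+(m:ℝ))^2)⁻¹
  - (18*x^6+84*x^5+18*x^4-72*x^3-114*x^2-60*x-18) * ((x+1+(m:ℝ))^3)⁻¹
  + (6*x^7+30*x^6+18*x^5-6*x^4-30*x^3-54*x^2-42*x-18) * ((x+1+(m:ℝ))^4)⁻¹ < 0 := by
  set a : ℝ := x+1+(m:ℝ) with hadef
  have hm : (0:ℝ) ≤ m := m.cast_nonneg
  have ha : 0 < a := by rw [hadef]; linarith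
  have hs : 0 ≤ a - (x+1) := by rw [hadef]; linarith
  set s : ℝ := a - (x+1) with hsdef
  -- powers of x comparisons
  have hx65 : x^6 ≤ x^5 := by nlinarith [pow_pos hx0 5, pow_pos hx0 6]
  have hx54 : x^5 ≤ x^4 := by nlinarith [pow_pos hx0 4, pow_pos hx0 5]
  have hx43 : x^4 ≤ x^3 := by nlinarith [pow_pos hx0 3, pow_pos hx0 4]
  have hx32 : x^3 ≤ x^2 := by nlinarith [pow_pos hx0 2, pow_pos hx0 3]
  have hN0 : 12*x^6+24*x^5-36*x^4-144*x^3-156*x^2-72*x-12 < 0 := by nlinarith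
  have hN1 : 6*x^6+60*x^5+54*x^4-168*x^3-246*x^2-132*x-6 ≤ 0 := by nlinarith
  have hN2 : 12*x^5+60*x^4-24*x^3-96*x^2-84*x-12 ≤ 0 := by nlinarith
  have hN : (12*x^5+60*x^4-24*x^3-96*x^2-84*x-12) * a^2
      - (18*x^6+84*x^5+18*x^4-72*x^3-114*x^2-60*x-18) * a
      + (6*x^7+30*x^6+18*x^5-6*x^4-30*x^3-54*x^2-42*x-18) < 0 := by
    have h1 : s * (6*x^6+60*x^5+54*x^4-168*x^3-246*x^2-132*x-6) ≤ 0 :=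
      mul_nonpos_of_nonneg_of_nonpos hs hN1
    have h2 : (s*s) * (12*x^5+60*x^4-24*x^3-96*x^2-84*x-12) ≤ 0 :=
      mul_nonpos_of_nonneg_of_nonpos (mul_nonneg hs hs) hN2
    have ha' : a = x + 1 + s := by rw [hsdef]; ring
    rw [ha']
    nlinarith [h1, h2, hN0]
  have heq : (12*x^5+60*x^4-24*x^3-96*x^2-84*x-12) * (a^2)⁻¹
      - (18*x^6+84*x^5+18*x^4-72*x^3-114*x^2-60*x-18) * (a^3)⁻¹
      + (6*x^7+30*x^6+18*x^5-6*x^4-30*x^3-54*x^2-42*x-18) * (a^4)⁻¹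
      = ((12*x^5+60*x^4-24*x^3-96*x^2-84*x-12) * a^2
      - (18*x^6+84*x^5+18*x^4-72*x^3-114*x^2-60*x-18) * a
      + (6*x^7+30*x^6+18*x^5-6*x^4-30*x^3-54*x^2-42*x-18)) * (a^4)⁻¹ := by
    field_simp
  rw [heq]
  exact mul_neg_of_neg_of_pos hN (by positivity)

lemma Dfun_neg {x : ℝ} (hx0 : 0 < x) (hx1 : x < 1) : Dfun x < 0 := by
  have ht : (0:ℝ) < x + 1 := by linarith
  have h2 : Summable (fun m : ℕ => (((x+1)+(m:ℝ))^2)⁻¹) := summable_S le_rfl ht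
  have h3 : Summable (fun m : ℕ => (((x+1)+(m:ℝ))^3)⁻¹) := summable_S (by norm_num) ht
  have h4 : Summable (fun m : ℕ => (((x+1)+(m:ℝ))^4)⁻¹) := summable_S (by norm_num) ht
  set A : ℝ := 12*x^5+60*x^4-24*x^3-96*x^2-84*x-12 with hA
  set B : ℝ := 18*x^6+84*x^5+18*x^4-72*x^3-114*x^2-60*x-18 with hB
  set C : ℝ := 6*x^7+30*x^6+18*x^5-6*x^4-30*x^3-54*x^2-42*x-18 with hC
  have hsum : Summable (fun m : ℕ =>
      A * (((x+1)+(m:ℝ))^2)⁻¹ - B * (((x+1)+(m:ℝ))^3)⁻¹ + C * (((x+1)+(m:ℝ))^4)⁻¹) :=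
    ((h2.mul_left A).sub (h3.mul_left B)).add (h4.mul_left C)
  have hDeq : Dfun x = ∑' m : ℕ,
      (A * (((x+1)+(m:ℝ))^2)⁻¹ - B * (((x+1)+(m:ℝ))^3)⁻¹ + C * (((x+1)+(m:ℝ))^4)⁻¹) := by
    rw [Dfun, S, S, S]
    rw [← tsum_mul_left (a := A), ← tsum_mul_left (a := B), ← tsum_mul_left (a := C)]
    rw [← Summable.tsum_sub (h2.mul_left A) (h3.mul_left B),
      ← Summable.tsum_add ((h2.mul_left A).sub (h3.mul_left B)) (h4.mul_left C)]
  have htau : ∀ m : ℕ,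
      A * (((x+1)+(m:ℝ))^2)⁻¹ - B * (((x+1)+(m:ℝ))^3)⁻¹ + C * (((x+1)+(m:ℝ))^4)⁻¹ < 0 := by
    intro m
    have := tau_neg hx0 hx1 m
    rw [hA, hB, hC]
    convert this using 3 <;> ring_nf
  rw [hDeq, Summable.tsum_eq_zero_add hsum]
  have hle : ∑' m : ℕ,
      (A * (((x+1)+((m+1:ℕ):ℝ))^2)⁻¹ - B * (((x+1)+((m+1:ℕ):ℝ))^3)⁻¹
        + C * (((x+1)+((m+1:ℕ):ℝ))^4)⁻¹) ≤ 0 :=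
    tsum_nonpos (fun m => (htau (m+1)).le)
  have h0 := htau 0
  linarith

noncomputable def Ffun (x : ℝ) : ℝ :=
  2 * (x^6 + 6*x^5 - 3*x^4 - 16*x^3 - 21*x^2 - 6*x - 1) * S 2 (x + 1)
    + (x + 1) * (x^2 + 1) * (x^4 + 4*x^3 - 2*x^2 - 4*x - 3) * (-2 * S 3 (x + 1))

lemma hasDerivAt_Ffun {x : ℝ} (hx : -1 < x) : HasDerivAt Ffun (Dfun x) x := by
  have ht : (0:ℝ) < x + 1 := by linarith
  have hS2 : HasDerivAt (fun x : ℝ => S 2 (x+1)) (-2 * S 3 (x+1)) x := by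
    have := (hasDerivAt_S2 ht).comp x ((hasDerivAt_id x).add_const 1)
    simpa [Function.comp_def] using this
  have hS3 : HasDerivAt (fun x : ℝ => S 3 (x+1)) (-3 * S 4 (x+1)) x := by
    have := (hasDerivAt_S3 ht).comp x ((hasDerivAt_id x).add_const 1)
    simpa [Function.comp_def] using this
  have hP : HasDerivAt (fun x : ℝ => 2 * (x^6 + 6*x^5 - 3*x^4 - 16*x^3 - 21*x^2 - 6*x - 1))
      (2 * (6*x^5 + 30*x^4 - 12*x^3 - 48*x^2 - 42*x - 6)) x := by
    have h : HasDerivAt (fun x : ℝ => x^6 + 6*x^5 - 3*x^4 - 16*x^3 - 21*x^2 - 6*x - 1)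
        (6*x^5 + 30*x^4 - 12*x^3 - 48*x^2 - 42*x - 6) x := by
      have h6 := hasDerivAt_pow 6 x
      have h5 := (hasDerivAt_pow 5 x).const_mul (6:ℝ)
      have h4 := (hasDerivAt_pow 4 x).const_mul (3:ℝ)
      have h3 := (hasDerivAt_pow 3 x).const_mul (16:ℝ)
      have h2 := (hasDerivAt_pow 2 x).const_mul (21:ℝ)
      have h1 := (hasDerivAt_id x).const_mul (6:ℝ)
      have := ((((((h6.add h5).sub h4).sub h3).sub h2).sub h1).sub_const 1)
      refine this.congr_deriv ?_
      push_cast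
      ring
    exact h.const_mul (2:ℝ)
  have hQ : HasDerivAt (fun x : ℝ => (x + 1) * (x^2 + 1) * (x^4 + 4*x^3 - 2*x^2 - 4*x - 3))
      (7*x^6+30*x^5+15*x^4-4*x^3-15*x^2-18*x-7) x := by
    have ha : HasDerivAt (fun x : ℝ => x + 1) 1 x := (hasDerivAt_id x).add_const 1
    have hb : HasDerivAt (fun x : ℝ => x^2 + 1) (2*x) x := by
      have := (hasDerivAt_pow 2 x).add_const 1
      refine this.congr_deriv ?_
      push_cast
      ring
    have hcx : HasDerivAt (fun x : ℝ => x^4 + 4*x^3 - 2*x^2 - 4*x - 3)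
        (4*x^3 + 12*x^2 - 4*x - 4) x := by
      have h4 := hasDerivAt_pow 4 x
      have h3 := (hasDerivAt_pow 3 x).const_mul (4:ℝ)
      have h2 := (hasDerivAt_pow 2 x).const_mul (2:ℝ)
      have h1 := (hasDerivAt_id x).const_mul (4:ℝ)
      have := (((h4.add h3).sub h2).sub h1).sub_const 3
      refine this.congr_deriv ?_
      push_cast
      ring
    have := (ha.mul hb).mul hcx
    refine this.congr_deriv ?_
    simp only [Pi.mul_apply]
    ring
  have hQ2 : HasDerivAt (fun x : ℝ => -2 * S 3 (x+1)) (6 * S 4 (x+1)) x := by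
    have := hS3.const_mul (-2:ℝ)
    refine this.congr_deriv ?_
    ring
  have := ((hP.mul hS2).add (hQ.mul hQ2))
  have hfe : Ffun = fun x : ℝ =>
      2 * (x^6 + 6*x^5 - 3*x^4 - 16*x^3 - 21*x^2 - 6*x - 1) * S 2 (x + 1)
        + (x + 1) * (x^2 + 1) * (x^4 + 4*x^3 - 2*x^2 - 4*x - 3) * (-2 * S 3 (x + 1)) := rfl
  rw [hfe]
  refine this.congr_deriv ?_
  rw [Dfun]
  ring

lemma Ffun_strictAntiOn : StrictAntiOn Ffun (Set.Icc 0 1) := by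
  apply strictAntiOn_of_deriv_neg (convex_Icc 0 1)
  · intro x hx
    exact (hasDerivAt_Ffun (by linarith [hx.1] : (-1:ℝ) < x)).continuousAt.continuousWithinAt
  · intro x hx
    rw [interior_Icc] at hx
    rw [(hasDerivAt_Ffun (by linarith [hx.1] : (-1:ℝ) < x)).deriv]
    exact Dfun_neg hx.1 hx.2

theorem stmt_14 :
    StrictAntiOn
      (fun x : ℝ =>
        2 * (x^6 + 6*x^5 - 3*x^4 - 16*x^3 - 21*x^2 - 6*x - 1) * polygamma 1 (x + 1)
          + (x + 1) * (x^2 + 1) * (x^4 + 4*x^3 - 2*x^2 - 4*x - 3) * polygamma 2 (x + 1))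
      (Set.Icc 0 1) := by
  have heq : ∀ x ∈ Set.Icc (0:ℝ) 1,
      2 * (x^6 + 6*x^5 - 3*x^4 - 16*x^3 - 21*x^2 - 6*x - 1) * polygamma 1 (x + 1)
        + (x + 1) * (x^2 + 1) * (x^4 + 4*x^3 - 2*x^2 - 4*x - 3) * polygamma 2 (x + 1)
        = Ffun x := by
    intro x hx
    have hx1 : (0:ℝ) < x + 1 := by linarith [hx.1]
    rw [polygamma_one_eq hx1, polygamma_two_eq hx1, Ffun]
  intro a ha b hb hab
  simp only
  rw [heq a ha, heq b hb]
  exact Ffun_strictAntiOn ha hb hab
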